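/- arXiv:1303.2814 — 3 statements merged into one kernel-verified Lean document; each statement's English description precedes it below -/
import Mathlib

section
/- Canonical path bound: for a reversible irreducible transition matrix P on a finite state space with stationary distribution μ, fix for every ordered pair (x,y) a simple path γ_{x,y} in the transition graph of P. Then Gap(P) ≥ ρ^{-1}, where ρ = max over edges (z,v) with P(z,v) > 0 of (1/(μ(z)P(z,v))) Σ_{γ_{x,y} ∋ (z,v)} μ(x) μ(y) len(γ_{x,y}). -/
open Finset

variable {X : Type*}

/-- A (row-)stochastic transition matrix. -/
def IsStochastic [Fintype X] (P : X → X → ℝ) : Prop :=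
  (∀ x y, 0 ≤ P x y) ∧ ∀ x, ∑ y, P x y = 1

/-- A strictly positive probability distribution on a finite set. -/
def IsProbDist [Fintype X] (π : X → ℝ) : Prop :=
  (∀ x, 0 < π x) ∧ ∑ x, π x = 1

/-- Reversibility (detailed balance) of `P` with respect to `π`. -/
def IsReversible [Fintype X] (π : X → ℝ) (P : X → X → ℝ) : Prop :=
  ∀ x y, π x * P x y = π y * P y x

/-- Nonnegative definiteness of `P` as a self-adjoint operator on `L²(π)`. -/
def IsNonnegDef [Fintype X] (π : X → ℝ) (P : X → X → ℝ) : Prop :=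
  ∀ f : X → ℝ, 0 ≤ ∑ x, ∑ y, π x * f x * P x y * f y

noncomputable def distMean [Fintype X] (π f : X → ℝ) : ℝ := ∑ x, π x * f x

noncomputable def distVar [Fintype X] (π f : X → ℝ) : ℝ :=
  ∑ x, π x * (f x - distMean π f) ^ 2

noncomputable def dirichletForm [Fintype X] (π : X → ℝ) (P : X → X → ℝ) (f : X → ℝ) : ℝ :=
  (1 / 2) * ∑ x, ∑ y, π x * P x y * (f x - f y) ^ 2

/-- Spectral gap of a reversible chain, via the variational characterization
`Gap(P) = inf { E(f,f) / Var_π(f) : Var_π(f) ≠ 0 }`, which equals `1 - λ₂`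
(one minus the second-largest eigenvalue) for reversible chains. -/
noncomputable def spectralGap [Fintype X] (π : X → ℝ) (P : X → X → ℝ) : ℝ :=
  sInf {r | ∃ f : X → ℝ, distVar π f ≠ 0 ∧ r = dirichletForm π P f / distVar π f}

def MCIrreducible [Fintype X] [DecidableEq X] (P : Matrix X X ℝ) : Prop :=
  ∀ x y : X, ∃ n : ℕ, 0 < (P ^ n) x y

/-- Aperiodicity: for every state, the gcd of its return times is 1. -/
def IsAperiodic [Fintype X] [DecidableEq X] (P : Matrix X X ℝ) : Prop :=
  ∀ x : X, ∀ d : ℕ, (∀ n : ℕ, 0 < n → 0 < (P ^ n) x x → d ∣ n) → d = 1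

/-- Total variation distance between the `n`-step distribution started at `x`
and `π`. -/
noncomputable def tvDist [Fintype X] [DecidableEq X] (π : X → ℝ) (P : Matrix X X ℝ)
    (n : ℕ) (x : X) : ℝ :=
  ⨆ D : Finset X, |(∑ y ∈ D, (P ^ n) x y) - ∑ y ∈ D, π y|

/-- Mixing time: least `n` such that from every initial state, all later
times are within total variation `ε` of `π`. -/
noncomputable def mixingTime [Fintype X] [DecidableEq X] (π : X → ℝ) (P : Matrix X X ℝ)
    (ε : ℝ) : ℕ :=
  sInf {n | ∀ x : X, ∀ m, n ≤ m → tvDist π P m x ≤ ε}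

/-- The list of directed edges traversed by a path given as a list of
vertices. -/
def pathEdges (l : List X) : List (X × X) := l.zip l.tail


section Aux

lemma cp_telescope (f : X → ℝ) : ∀ (l : List X) (x y : X), l.head? = some x →
    l.getLast? = some y → ((pathEdges l).map (fun e => f e.1 - f e.2)).sum = f x - f y
  | [], x, y, h, _ => by simp at h
  | [a], x, y, h, h' => by
      simp at h h'; subst h h'; simp [pathEdges]
  | a :: b :: t, x, y, h, h' => by
      simp at h; subst h
      rw [List.getLast?_cons_cons] at h'
      have ih := cp_telescope f (b :: t) b y rfl h'
      have hpe : pathEdges (a :: b :: t) = (a, b) :: pathEdges (b :: t) := rfl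
      rw [hpe, List.map_cons, List.sum_cons, ih]
      ring

lemma cp_list_cs {ι : Type*} : ∀ (l : List ι) (g : ι → ℝ),
    ((l.map g).sum) ^ 2 ≤ (l.length : ℝ) * (l.map (fun i => g i ^ 2)).sum
  | [], g => by simp
  | a :: t, g => by
      have ih := cp_list_cs t g
      simp only [List.map_cons, List.sum_cons, List.length_cons]
      push_cast
      set S := (t.map g).sum
      set T := (t.map (fun i => g i ^ 2)).sum
      set n := (t.length : ℝ)
      have hn : 0 ≤ n := Nat.cast_nonneg _
      have hT : 0 ≤ T := by
        apply List.sum_nonneg; intro x hx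
        simp only [List.mem_map] at hx
        obtain ⟨i, _, rfl⟩ := hx; positivity
      by_cases ht : t = []
      · subst ht; simp [S, T, n]
      · have hn1 : (1:ℝ) ≤ n := by
          have : 1 ≤ t.length := List.length_pos_iff.mpr ht
          simp only [n]; exact_mod_cast this
        nlinarith [sq_nonneg (n * g a - S), mul_nonneg hn hT, ih, hn1]

lemma cp_nodup_pathEdges {l : List X} (h : l.Nodup) : (pathEdges l).Nodup := by
  have h2 : ((pathEdges l).map Prod.snd) = l.tail := by
    apply List.map_snd_zip
    exact (List.length_tail (l := l)) ▸ Nat.sub_le _ _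
  have ht : (l.tail).Nodup := h.tail
  rw [← h2] at ht
  exact ht.of_map _

lemma cp_var_eq [Fintype X] (π f : X → ℝ) (h1 : ∑ x, π x = 1) :
    distVar π f = (1/2) * ∑ x, ∑ y, π x * π y * (f x - f y) ^ 2 := by
  set m := distMean π f with hm
  set A := ∑ x, π x * f x ^ 2 with hA
  have hL : distVar π f = A - m ^ 2 := by
    simp only [distVar]
    rw [Finset.sum_congr rfl (fun x _ => show π x * (f x - m) ^ 2
      = π x * f x ^ 2 - 2 * m * (π x * f x) + m ^ 2 * π x by ring)]
    rw [Finset.sum_add_distrib, Finset.sum_sub_distrib, ← Finset.mul_sum, ← Finset.mul_sum, h1]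
    simp only [hA, hm, distMean]
    ring
  have hR : ∑ x, ∑ y, π x * π y * (f x - f y) ^ 2 = 2 * (A - m ^ 2) := by
    rw [Finset.sum_congr rfl (fun x _ => show
        ∑ y, π x * π y * (f x - f y) ^ 2
        = (π x * f x ^ 2) * (∑ y, π y) - 2 * (π x * f x) * (∑ y, π y * f y)
          + π x * (∑ y, π y * f y ^ 2) by
      rw [Finset.mul_sum, Finset.mul_sum, Finset.mul_sum, ← Finset.sum_sub_distrib,
        ← Finset.sum_add_distrib]
      exact Finset.sum_congr rfl (fun y _ => by ring))]
    rw [Finset.sum_add_distrib, Finset.sum_sub_distrib, h1, ← Finset.sum_mul,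
      show ∑ x, π x * ∑ y, π y * f y ^ 2 = (∑ x, π x) * ∑ y, π y * f y ^ 2 from
        (Finset.sum_mul _ _ _).symm,
      h1, ← Finset.sum_mul,
      show ∑ x, 2 * (π x * f x) = 2 * ∑ x, π x * f x from (Finset.mul_sum _ _ _).symm]
    simp only [hA, hm, distMean]
    ring
  rw [hL, hR]; ring

end Aux

/-- Canonical path (Poincaré) bound: if for every ordered
pair `(x,y)` a simple path `γ x y` in the transition graph of `P` is fixed,
then `Gap(P) ≥ ρ⁻¹` where
`ρ = max_{(z,v) : P(z,v)>0} (μ(z)P(z,v))⁻¹ ∑_{γ_{x,y} ∋ (z,v)} μ(x)μ(y) len(γ_{x,y})`. -/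

theorem gap_ge_inv_path_constant [Fintype X] [DecidableEq X]
    (μ : X → ℝ) (P : Matrix X X ℝ)
    (hμ : IsProbDist μ) (hP : IsStochastic (fun x y => P x y))
    (hrev : IsReversible μ (fun x y => P x y)) (hirr : MCIrreducible P)
    (γ : X → X → List X)
    (hstart : ∀ x y, (γ x y).head? = some x)
    (hend : ∀ x y, (γ x y).getLast? = some y)
    (hnodup : ∀ x y, (γ x y).Nodup)
    (hpos : ∀ x y, ∀ e ∈ pathEdges (γ x y), 0 < P e.1 e.2) :
    (sSup {r | ∃ z v, 0 < P z v ∧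
        r = (1 / (μ z * P z v)) *
          ∑ x, ∑ y, (if (z, v) ∈ pathEdges (γ x y) then
            μ x * μ y * ((pathEdges (γ x y)).length : ℝ) else 0)})⁻¹ ≤
      spectralGap μ (fun x y => P x y) := by
  classical
  -- Notation
  set W : X → X → ℝ := fun z v => ∑ x, ∑ y,
    (if (z, v) ∈ pathEdges (γ x y) then
      μ x * μ y * ((pathEdges (γ x y)).length : ℝ) else 0) with hW
  set S : Set ℝ := {r | ∃ z v, 0 < P z v ∧ r = (1 / (μ z * P z v)) * W z v} with hS
  set ρ := sSup S with hρ
  -- X is nonempty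
  have hXne : Nonempty X := by
    by_contra h
    rw [not_nonempty_iff] at h
    have := hμ.2
    simp [Finset.univ_eq_empty] at this
  -- S is nonempty
  have hSne : S.Nonempty := by
    obtain ⟨z⟩ := hXne
    have : ∃ v, 0 < P z v := by
      by_contra hv
      push_neg at hv
      have hz : ∀ v : X, P z v = 0 := fun v => le_antisymm (hv v) (hP.1 z v)
      have := hP.2 z
      simp [hz] at this
    obtain ⟨v, hv⟩ := this
    exact ⟨_, z, v, hv, rfl⟩
  -- S is bounded above
  have hSbdd : BddAbove S := by
    apply Set.Finite.bddAbove
    apply Set.Finite.subset (Set.finite_range fun p : X × X => (1 / (μ p.1 * P p.1 p.2)) * W p.1 p.2)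
    rintro r ⟨z, v, _, rfl⟩
    exact ⟨(z, v), rfl⟩
  -- W is nonneg
  have hWnn : ∀ z v, 0 ≤ W z v := by
    intro z v
    apply Finset.sum_nonneg; intro x _
    apply Finset.sum_nonneg; intro y _
    split
    · have := (hμ.1 x).le; have := (hμ.1 y).le; positivity
    · exact le_refl 0
  -- elements of S are nonneg, hence ρ ≥ 0
  have hSnn : ∀ r ∈ S, 0 ≤ r := by
    rintro r ⟨z, v, hzv, rfl⟩
    have h1 : 0 < μ z * P z v := mul_pos (hμ.1 z) hzv
    have := hWnn z v
    positivity
  have hρ0 : 0 ≤ ρ := by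
    obtain ⟨r0, hr0⟩ := hSne
    exact le_trans (hSnn r0 hr0) (le_csSup hSbdd hr0)
  -- key bound on W
  have hWbound : ∀ z v, 0 < P z v → W z v ≤ ρ * (μ z * P z v) := by
    intro z v hzv
    have hc : 0 < μ z * P z v := mul_pos (hμ.1 z) hzv
    have hmem : (1 / (μ z * P z v)) * W z v ∈ S := ⟨z, v, hzv, rfl⟩
    have hle : (1 / (μ z * P z v)) * W z v ≤ ρ := le_csSup hSbdd hmem
    have := mul_le_mul_of_nonneg_left hle hc.le
    calc W z v = (μ z * P z v) * ((1 / (μ z * P z v)) * W z v) := by have := (hμ.1 z).ne'; field_simp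
    _ ≤ (μ z * P z v) * ρ := this
    _ = ρ * (μ z * P z v) := by ring
  -- zero P means W vanishes
  have hWzero : ∀ z v, ¬ 0 < P z v → W z v = 0 := by
    intro z v hzv
    rw [hW]
    apply Finset.sum_eq_zero; intro x _
    apply Finset.sum_eq_zero; intro y _
    rw [if_neg]
    intro hmem
    exact hzv (hpos x y (z, v) hmem)
  -- main Poincaré inequality
  have key : ∀ f : X → ℝ, distVar μ f ≤ ρ * dirichletForm μ (fun x y => P x y) f := by
    intro f
    have step1 : ∀ x y : X, μ x * μ y * (f x - f y) ^ 2 ≤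
        ∑ z, ∑ v, (if (z, v) ∈ pathEdges (γ x y) then
          μ x * μ y * ((pathEdges (γ x y)).length : ℝ) * (f z - f v) ^ 2 else 0) := by
      intro x y
      have htel := cp_telescope f (γ x y) x y (hstart x y) (hend x y)
      have hcs := cp_list_cs (pathEdges (γ x y)) (fun e => f e.1 - f e.2)
      rw [htel] at hcs
      have hnn : 0 ≤ μ x * μ y := mul_nonneg (hμ.1 x).le (hμ.1 y).le
      have h2 := mul_le_mul_of_nonneg_left hcs hnn
      have e1 : ∑ p : X × X, (if p ∈ (pathEdges (γ x y)).toFinset then (f p.1 - f p.2) ^ 2 else 0)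
          = ∑ p ∈ (pathEdges (γ x y)).toFinset, (f p.1 - f p.2) ^ 2 := by
        rw [Finset.sum_ite_mem, Finset.univ_inter]
      have hconv : ((pathEdges (γ x y)).map (fun e => (f e.1 - f e.2) ^ 2)).sum
          = ∑ z, ∑ v, (if (z, v) ∈ pathEdges (γ x y) then (f z - f v) ^ 2 else 0) := by
        calc ((pathEdges (γ x y)).map (fun e => (f e.1 - f e.2) ^ 2)).sum
            = ∑ p ∈ (pathEdges (γ x y)).toFinset, (f p.1 - f p.2) ^ 2 :=
              (List.sum_toFinset _ (cp_nodup_pathEdges (hnodup x y))).symm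
          _ = ∑ p : X × X, (if p ∈ (pathEdges (γ x y)).toFinset then (f p.1 - f p.2) ^ 2 else 0) :=
              e1.symm
          _ = ∑ z, ∑ v, (if (z, v) ∈ pathEdges (γ x y) then (f z - f v) ^ 2 else 0) := by
              rw [Fintype.sum_prod_type]; simp [List.mem_toFinset]
      rw [hconv] at h2
      calc μ x * μ y * (f x - f y) ^ 2 ≤ μ x * μ y *
          (((pathEdges (γ x y)).length : ℝ) *
            ∑ z, ∑ v, (if (z, v) ∈ pathEdges (γ x y) then (f z - f v) ^ 2 else 0)) := h2
      _ = ∑ z, ∑ v, (if (z, v) ∈ pathEdges (γ x y) then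
            μ x * μ y * ((pathEdges (γ x y)).length : ℝ) * (f z - f v) ^ 2 else 0) := by
          simp only [Finset.mul_sum, mul_ite, mul_zero]
          apply Finset.sum_congr rfl; intro z _
          apply Finset.sum_congr rfl; intro v _
          split
          · ring
          · rfl
    have step2 : distVar μ f ≤ (1/2) * ∑ z, ∑ v, (f z - f v) ^ 2 * W z v := by
      rw [cp_var_eq μ f hμ.2]
      have hsw : ∑ x, ∑ y, ∑ z, ∑ v, (if (z, v) ∈ pathEdges (γ x y) then
            μ x * μ y * ((pathEdges (γ x y)).length : ℝ) * (f z - f v) ^ 2 else 0)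
          = ∑ z, ∑ v, (f z - f v) ^ 2 * W z v := by
        have hcomm : (∑ p : X × X, ∑ q : X × X, (if (q.1, q.2) ∈ pathEdges (γ p.1 p.2) then
              μ p.1 * μ p.2 * ((pathEdges (γ p.1 p.2)).length : ℝ) * (f q.1 - f q.2) ^ 2 else 0))
            = ∑ q : X × X, ∑ p : X × X, (if (q.1, q.2) ∈ pathEdges (γ p.1 p.2) then
              μ p.1 * μ p.2 * ((pathEdges (γ p.1 p.2)).length : ℝ) * (f q.1 - f q.2) ^ 2 else 0) :=
          Finset.sum_comm
        simp only [Fintype.sum_prod_type] at hcomm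
        rw [hcomm]
        apply Finset.sum_congr rfl; intro z _
        apply Finset.sum_congr rfl; intro v _
        simp only [hW, Finset.mul_sum, mul_ite, mul_zero]
        apply Finset.sum_congr rfl; intro x _
        apply Finset.sum_congr rfl; intro y _
        split
        · ring
        · rfl
      rw [← hsw]
      have := Finset.sum_le_sum (fun x (_ : x ∈ Finset.univ) =>
        Finset.sum_le_sum (fun y (_ : y ∈ Finset.univ) => step1 x y))
      linarith
    have step3 : (1/2) * ∑ z, ∑ v, (f z - f v) ^ 2 * W z v
        ≤ ρ * dirichletForm μ (fun x y => P x y) f := by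
      have hterm : ∀ z v : X, (f z - f v) ^ 2 * W z v ≤ ρ * (μ z * P z v * (f z - f v) ^ 2) := by
        intro z v
        by_cases hzv : 0 < P z v
        · have := mul_le_mul_of_nonneg_left (hWbound z v hzv) (sq_nonneg (f z - f v))
          calc (f z - f v) ^ 2 * W z v ≤ (f z - f v) ^ 2 * (ρ * (μ z * P z v)) := this
          _ = ρ * (μ z * P z v * (f z - f v) ^ 2) := by ring
        · rw [hWzero z v hzv, mul_zero]
          have hP0 : P z v = 0 := le_antisymm (not_lt.mp hzv) (hP.1 z v)
          rw [hP0]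
          simp
      have hsum := Finset.sum_le_sum (fun z (_ : z ∈ Finset.univ) =>
        Finset.sum_le_sum (fun v (_ : v ∈ Finset.univ) => hterm z v))
      rw [dirichletForm]
      have heq : ∑ z, ∑ v, ρ * (μ z * P z v * (f z - f v) ^ 2)
          = ρ * ∑ z, ∑ v, μ z * P z v * (f z - f v) ^ 2 := by
        rw [Finset.mul_sum]
        apply Finset.sum_congr rfl; intro z _
        rw [Finset.mul_sum]
      rw [heq] at hsum
      calc (1/2) * ∑ z, ∑ v, (f z - f v) ^ 2 * W z v
          ≤ (1/2) * (ρ * ∑ z, ∑ v, μ z * P z v * (f z - f v) ^ 2) := by linarith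
      _ = ρ * ((1/2) * ∑ x, ∑ y, μ x * P x y * (f x - f y) ^ 2) := by ring
    exact le_trans step2 step3
  -- conclude
  rw [spectralGap]
  set T : Set ℝ := {r | ∃ f : X → ℝ, distVar μ f ≠ 0 ∧
    r = dirichletForm μ (fun x y => P x y) f / distVar μ f} with hT
  have hVarnn : ∀ f : X → ℝ, 0 ≤ distVar μ f := by
    intro f
    apply Finset.sum_nonneg; intro x _
    have := (hμ.1 x).le
    positivity
  have hEnn : ∀ f : X → ℝ, 0 ≤ dirichletForm μ (fun x y => P x y) f := by
    intro f
    rw [dirichletForm]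
    have : ∀ x ∈ Finset.univ, (0:ℝ) ≤ ∑ y, μ x * P x y * (f x - f y) ^ 2 := by
      intro x _
      apply Finset.sum_nonneg; intro y _
      have h1 := (hμ.1 x).le
      have h2 := hP.1 x y
      positivity
    have := Finset.sum_nonneg this
    linarith
  rcases Set.eq_empty_or_nonempty T with hTe | hTne
  · rw [hTe, Real.sInf_empty]
    -- show ρ = 0
    have hsub : ∀ a b : X, a = b := by
      intro a b
      by_contra hab
      set g : X → ℝ := fun w => if w = a then (1:ℝ) else 0 with hg
      have hvg : distVar μ g = 0 := by
        by_contra hvg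
        exact (Set.eq_empty_iff_forall_notMem.mp hTe _) ⟨g, hvg, rfl⟩
      have hconst : ∀ x : X, g x = distMean μ g := by
        intro x
        have h0 : ∀ i ∈ Finset.univ, (0:ℝ) ≤ μ i * (g i - distMean μ g) ^ 2 := by
          intro i _
          have := (hμ.1 i).le
          positivity
        have := (Finset.sum_eq_zero_iff_of_nonneg h0).mp hvg x (Finset.mem_univ x)
        have hx := hμ.1 x
        have : (g x - distMean μ g) ^ 2 = 0 := by
          by_contra h2
          exact h2 (by nlinarith [sq_nonneg (g x - distMean μ g)])
        nlinarith [this]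
      have := (hconst a).trans (hconst b).symm
      simp only [hg, if_neg (fun h : b = a => hab h.symm)] at this
      simp at this
    have hpe : ∀ x y : X, pathEdges (γ x y) = [] := by
      intro x y
      rcases hl : γ x y with _ | ⟨a, t⟩
      · rfl
      · rcases t with _ | ⟨b, t2⟩
        · rfl
        · exfalso
          have hnd := hnodup x y
          rw [hl] at hnd
          have : a ≠ b := by
            intro hab
            exact (List.nodup_cons.mp hnd).1 (hab ▸ (List.mem_cons_self : b ∈ b :: t2))
          exact this (hsub a b)
    have hW0 : ∀ z v : X, W z v = 0 := by
      intro z v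
      rw [hW]
      apply Finset.sum_eq_zero; intro x _
      apply Finset.sum_eq_zero; intro y _
      simp [hpe x y]
    have hSzero : ∀ r ∈ S, r = 0 := by
      rintro r ⟨z, v, _, rfl⟩
      rw [hW0, mul_zero]
    have : ρ = 0 := le_antisymm (csSup_le hSne (fun r hr => (hSzero r hr).le)) hρ0
    rw [this]
    simp
  · apply le_csInf hTne
    rintro r ⟨f, hvf, rfl⟩
    have hVpos : 0 < distVar μ f := lt_of_le_of_ne (hVarnn f) (Ne.symm hvf)
    have hkey := key f
    have hρpos : 0 < ρ := by
      by_contra h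
      push_neg at h
      have : ρ * dirichletForm μ (fun x y => P x y) f ≤ 0 :=
        mul_nonpos_of_nonpos_of_nonneg h (hEnn f)
      linarith
    rw [le_div_iff₀ hVpos]
    have := mul_le_mul_of_nonneg_left hkey (inv_nonneg.mpr hρ0)
    calc ρ⁻¹ * distVar μ f ≤ ρ⁻¹ * (ρ * dirichletForm μ (fun x y => P x y) f) := this
    _ = dirichletForm μ (fun x y => P x y) f := by field_simp
end

section
/- The exclusion process with c particles on the complete graph on n vertices has spectral gap at least 1/c: i.e., the Markov chain on {z ∈ {0,1}^n : Σ_i z_i = c} (with 1 ≤ c ≤ n−1) that picks a uniformly random index j among {i : z_i = 1} and a uniformly random index ℓ ∈ {1,…,n}, swapping z_j and z_ℓ if z_ℓ = 0 and otherwise staying put, is reversible with respect to the uniform distribution on this set and satisfies Gap ≥ 1/c. -/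
open Finset

variable {X : Type*}

/-- State space of the exclusion process: binary configurations on `n` sites
with exactly `c` particles. -/
def ExclState (n c : ℕ) : Type :=
  {z : Fin n → Bool // (Finset.univ.filter (fun i => z i = true)).card = c}

instance (n c : ℕ) : Fintype (ExclState n c) := by unfold ExclState; infer_instance

instance (n c : ℕ) : DecidableEq (ExclState n c) := by unfold ExclState; infer_instance

/-- The exclusion process on the complete graph: pick a uniformly random
particle `j` (among the `c` occupied sites) and a uniformly random site
`ℓ ∈ {1,…,n}`; if `ℓ` is empty move the particle there, else stay. -/
noncomputable def exclKernel (n c : ℕ) : ExclState n c → ExclState n c → ℝ :=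
  fun z z' =>
    if z' = z then (c : ℝ) / n
    else if ∃ j ℓ : Fin n, z.1 j = true ∧ z.1 ℓ = false ∧
        z'.1 = Function.update (Function.update z.1 j false) ℓ true then
      1 / ((c : ℝ) * n)
    else 0



noncomputable def dOp {n : ℕ} (f : Finset (Fin n) → ℝ) : Finset (Fin n) → ℝ :=
  fun T => ∑ i ∈ Tᶜ, f (insert i T)

section Core
variable {n : ℕ}

private lemma mem_Pk {k : ℕ} {S : Finset (Fin n)} :
    S ∈ Finset.powersetCard k (univ : Finset (Fin n)) ↔ S.card = k := by
  simp [Finset.mem_powersetCard_univ]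

/-- Workhorse reindexing: summing over (k-set, outside point) = ((k+1)-set, inside point). -/
private lemma sum_up (k : ℕ) (F : Finset (Fin n) → Fin n → ℝ) :
    ∑ T ∈ Finset.powersetCard k (univ : Finset (Fin n)), ∑ i ∈ Tᶜ, F (insert i T) i
      = ∑ S ∈ Finset.powersetCard (k+1) (univ : Finset (Fin n)), ∑ i ∈ S, F S i := by
  rw [Finset.sum_sigma', Finset.sum_sigma']
  refine Finset.sum_bij (fun p hp => (⟨insert p.2 p.1, p.2⟩ : Σ _ : Finset (Fin n), Fin n))
    ?_ ?_ ?_ ?_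
  · rintro ⟨T, i⟩ hp
    rw [Finset.mem_sigma] at hp ⊢
    obtain ⟨hT, hi⟩ := hp
    rw [Finset.mem_compl] at hi
    rw [mem_Pk] at hT
    exact ⟨mem_Pk.2 (by rw [Finset.card_insert_of_notMem hi, hT]), Finset.mem_insert_self _ _⟩
  · rintro ⟨T, i⟩ hp ⟨T', i'⟩ hp' h
    rw [Finset.mem_sigma] at hp hp'
    simp only [Sigma.mk.inj_iff, heq_eq_eq] at h ⊢
    obtain ⟨hS, hi⟩ := h
    subst hi
    refine ⟨?_, rfl⟩
    have h1 : i ∉ T := Finset.mem_compl.1 hp.2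
    have h2 : i ∉ T' := Finset.mem_compl.1 hp'.2
    rw [← Finset.erase_insert h1, hS, Finset.erase_insert h2]
  · rintro ⟨S, i⟩ hp
    rw [Finset.mem_sigma, mem_Pk] at hp
    refine ⟨⟨S.erase i, i⟩, Finset.mem_sigma.2 ⟨mem_Pk.2 ?_, ?_⟩, ?_⟩
    · rw [Finset.card_erase_of_mem hp.2, hp.1]; rfl
    · exact Finset.mem_compl.2 (Finset.notMem_erase _ _)
    · simp only [Sigma.mk.inj_iff, heq_eq_eq]
      exact ⟨Finset.insert_erase hp.2, trivial⟩
  · rintro ⟨T, i⟩ hp; rfl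

/-- swap of off-diagonal double sums -/
private lemma erase_swap (s : Finset (Fin n)) (H : Fin n → Fin n → ℝ) :
    ∑ x ∈ s, ∑ y ∈ s.erase x, H x y = ∑ x ∈ s, ∑ y ∈ s.erase x, H y x := by
  have h1 : ∀ x ∈ s, ∑ y ∈ s.erase x, H x y = (∑ y ∈ s, H x y) - H x x :=
    fun x hx => Finset.sum_erase_eq_sub hx
  have h2 : ∀ x ∈ s, ∑ y ∈ s.erase x, H y x = (∑ y ∈ s, H y x) - H x x :=
    fun x hx => Finset.sum_erase_eq_sub hx
  rw [Finset.sum_congr rfl h1, Finset.sum_congr rfl h2, Finset.sum_sub_distrib,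
    Finset.sum_sub_distrib, Finset.sum_comm]
/-- square of a sum, split diagonal/off-diagonal -/
private lemma sq_sum_split (s : Finset (Fin n)) (a : Fin n → ℝ) :
    (∑ i ∈ s, a i) ^ 2 = (∑ i ∈ s, (a i) ^ 2) + ∑ i ∈ s, ∑ j ∈ s.erase i, a i * a j := by
  rw [sq, Finset.sum_mul_sum, ← Finset.sum_add_distrib]
  refine Finset.sum_congr rfl fun i hi => ?_
  rw [← Finset.add_sum_erase _ _ hi, sq]

/-- two-step reindexing -/
private lemma sum_up2 (k : ℕ) (F : Finset (Fin n) → Fin n → Fin n → ℝ) :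
    ∑ R ∈ Finset.powersetCard k (univ : Finset (Fin n)), ∑ i ∈ Rᶜ, ∑ j ∈ Rᶜ.erase i,
        F (insert j (insert i R)) i j
      = ∑ S ∈ Finset.powersetCard (k+2) (univ : Finset (Fin n)), ∑ i ∈ S, ∑ j ∈ S.erase i,
        F S i j := by
  have step1 : ∀ R : Finset (Fin n), ∀ i ∈ Rᶜ,
      ∑ j ∈ Rᶜ.erase i, F (insert j (insert i R)) i j
        = ∑ j ∈ (insert i R)ᶜ, F (insert j (insert i R)) i j := by
    intro R i _; rw [Finset.compl_insert]
  calc ∑ R ∈ Finset.powersetCard k (univ : Finset (Fin n)), ∑ i ∈ Rᶜ, ∑ j ∈ Rᶜ.erase i,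
        F (insert j (insert i R)) i j
      = ∑ R ∈ Finset.powersetCard k (univ : Finset (Fin n)), ∑ i ∈ Rᶜ,
          ∑ j ∈ (insert i R)ᶜ, F (insert j (insert i R)) i j := by
        refine Finset.sum_congr rfl fun R _ => Finset.sum_congr rfl fun i hi => step1 R i hi
    _ = ∑ S ∈ Finset.powersetCard (k+1) (univ : Finset (Fin n)), ∑ i ∈ S,
          ∑ j ∈ Sᶜ, F (insert j S) i j :=
        sum_up k (fun S i => ∑ j ∈ Sᶜ, F (insert j S) i j)
    _ = ∑ S ∈ Finset.powersetCard (k+1) (univ : Finset (Fin n)), ∑ j ∈ Sᶜ,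
          ∑ i ∈ S, F (insert j S) i j := by
        exact Finset.sum_congr rfl fun S _ => Finset.sum_comm
    _ = ∑ S ∈ Finset.powersetCard (k+1) (univ : Finset (Fin n)), ∑ j ∈ Sᶜ,
          ∑ i ∈ (insert j S).erase j, F (insert j S) i j := by
        refine Finset.sum_congr rfl fun S _ => Finset.sum_congr rfl fun j hj => ?_
        rw [Finset.erase_insert (Finset.mem_compl.1 hj)]
    _ = ∑ S ∈ Finset.powersetCard (k+2) (univ : Finset (Fin n)), ∑ j ∈ S,
          ∑ i ∈ S.erase j, F S i j :=
        sum_up (k+1) (fun S j => ∑ i ∈ S.erase j, F S i j)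
    _ = ∑ S ∈ Finset.powersetCard (k+2) (univ : Finset (Fin n)), ∑ i ∈ S,
          ∑ j ∈ S.erase i, F S i j := by
        refine Finset.sum_congr rfl fun S _ => ?_
        exact erase_swap S (fun j i => F S i j)

/-- mean transport -/
private lemma dOp_mean (k : ℕ) (f : Finset (Fin n) → ℝ) :
    ∑ T ∈ Finset.powersetCard k (univ : Finset (Fin n)), dOp f T
      = (k+1 : ℝ) * ∑ S ∈ Finset.powersetCard (k+1) (univ : Finset (Fin n)), f S := by
  have := sum_up k (fun S (_ : Fin n) => f S)
  rw [show (∑ T ∈ Finset.powersetCard k (univ : Finset (Fin n)), dOp f T) =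
      ∑ T ∈ Finset.powersetCard k (univ : Finset (Fin n)), ∑ i ∈ Tᶜ, f (insert i T) from rfl,
    this, Finset.mul_sum]
  refine Finset.sum_congr rfl fun S hS => ?_
  rw [Finset.sum_const, mem_Pk.1 hS]
  push_cast
  ring

/-- adjointness -/
private lemma adjoint (k : ℕ) (f g : Finset (Fin n) → ℝ) :
    ∑ S ∈ Finset.powersetCard (k+1) (univ : Finset (Fin n)), f S * ∑ i ∈ S, g (S.erase i)
      = ∑ T ∈ Finset.powersetCard k (univ : Finset (Fin n)), dOp f T * g T := by
  have : ∑ T ∈ Finset.powersetCard k (univ : Finset (Fin n)), dOp f T * g T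
      = ∑ T ∈ Finset.powersetCard k (univ : Finset (Fin n)), ∑ i ∈ Tᶜ,
          f (insert i T) * g ((insert i T).erase i) := by
    refine Finset.sum_congr rfl fun T _ => ?_
    rw [dOp, Finset.sum_mul]
    refine Finset.sum_congr rfl fun i hi => ?_
    rw [Finset.erase_insert (Finset.mem_compl.1 hi)]
  rw [this, sum_up k (fun S i => f S * g (S.erase i))]
  exact Finset.sum_congr rfl fun S _ => Finset.mul_sum _ _ _

/-- The key combinatorial identity : ‖U g‖² = ‖D g‖² + (n - 2(k+1)) ‖g‖². -/
private lemma uOp_norm (k : ℕ) (hk : k + 2 ≤ n) (g : Finset (Fin n) → ℝ) :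
    ∑ S ∈ Finset.powersetCard (k+2) (univ : Finset (Fin n)), (∑ i ∈ S, g (S.erase i)) ^ 2
      = (∑ R ∈ Finset.powersetCard k (univ : Finset (Fin n)), (dOp g R) ^ 2)
        + ((n : ℝ) - (2*k+2)) *
            ∑ T ∈ Finset.powersetCard (k+1) (univ : Finset (Fin n)), (g T) ^ 2 := by
  -- LHS = D1 + X
  have hL : ∑ S ∈ Finset.powersetCard (k+2) (univ : Finset (Fin n)),
        (∑ i ∈ S, g (S.erase i)) ^ 2
      = (∑ S ∈ Finset.powersetCard (k+2) (univ : Finset (Fin n)), ∑ i ∈ S, g (S.erase i) ^ 2)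
        + ∑ S ∈ Finset.powersetCard (k+2) (univ : Finset (Fin n)), ∑ i ∈ S, ∑ j ∈ S.erase i,
            g (S.erase i) * g (S.erase j) := by
    rw [← Finset.sum_add_distrib]
    exact Finset.sum_congr rfl fun S _ => sq_sum_split S (fun i => g (S.erase i))
  -- RHS first piece = D2 + Y
  have hR : ∑ R ∈ Finset.powersetCard k (univ : Finset (Fin n)), (dOp g R) ^ 2
      = (∑ R ∈ Finset.powersetCard k (univ : Finset (Fin n)), ∑ i ∈ Rᶜ, g (insert i R) ^ 2)
        + ∑ R ∈ Finset.powersetCard k (univ : Finset (Fin n)), ∑ i ∈ Rᶜ, ∑ j ∈ Rᶜ.erase i,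
            g (insert i R) * g (insert j R) := by
    rw [← Finset.sum_add_distrib]
    exact Finset.sum_congr rfl fun R _ => sq_sum_split Rᶜ (fun i => g (insert i R))
  -- D1
  have hD1 : ∑ S ∈ Finset.powersetCard (k+2) (univ : Finset (Fin n)), ∑ i ∈ S, g (S.erase i) ^ 2
      = ((n : ℝ) - (k+1)) * ∑ T ∈ Finset.powersetCard (k+1) (univ : Finset (Fin n)), g T ^ 2 := by
    rw [← sum_up (k+1) (fun S i => g (S.erase i) ^ 2), Finset.mul_sum]
    refine Finset.sum_congr rfl fun T hT => ?_
    have : ∀ i ∈ Tᶜ, g ((insert i T).erase i) ^ 2 = g T ^ 2 := by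
      intro i hi; rw [Finset.erase_insert (Finset.mem_compl.1 hi)]
    rw [Finset.sum_congr rfl this, Finset.sum_const, Finset.card_compl, mem_Pk.1 hT,
      Fintype.card_fin, nsmul_eq_mul]
    have : ((n - (k+1) : ℕ) : ℝ) = (n : ℝ) - (k+1) := by
      have : k + 1 ≤ n := by omega
      push_cast [this]; ring
    rw [this]
  -- D2
  have hD2 : ∑ R ∈ Finset.powersetCard k (univ : Finset (Fin n)), ∑ i ∈ Rᶜ, g (insert i R) ^ 2
      = ((k : ℝ) + 1) * ∑ T ∈ Finset.powersetCard (k+1) (univ : Finset (Fin n)), g T ^ 2 := by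
    rw [sum_up k (fun S _ => g S ^ 2), Finset.mul_sum]
    refine Finset.sum_congr rfl fun T hT => ?_
    rw [Finset.sum_const, mem_Pk.1 hT, nsmul_eq_mul]
    push_cast; ring
  -- X = Y
  have hXY : ∑ S ∈ Finset.powersetCard (k+2) (univ : Finset (Fin n)), ∑ i ∈ S, ∑ j ∈ S.erase i,
        g (S.erase i) * g (S.erase j)
      = ∑ R ∈ Finset.powersetCard k (univ : Finset (Fin n)), ∑ i ∈ Rᶜ, ∑ j ∈ Rᶜ.erase i,
          g (insert i R) * g (insert j R) := by
    rw [← sum_up2 k (fun S i j => g (S.erase i) * g (S.erase j))]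
    refine Finset.sum_congr rfl fun R hR => Finset.sum_congr rfl fun i hi =>
      Finset.sum_congr rfl fun j hj => ?_
    have hiR : i ∉ R := Finset.mem_compl.1 hi
    have hjR : j ∉ R := Finset.mem_compl.1 (Finset.mem_of_mem_erase hj)
    have hij : j ≠ i := Finset.ne_of_mem_erase hj
    have hi' : i ∉ insert j R := by
      simp only [Finset.mem_insert]
      rintro (h | h)
      · exact hij h.symm
      · exact hiR h
    have hj' : j ∉ insert i R := by
      simp only [Finset.mem_insert]
      rintro (h | h)
      · exact hij h
      · exact hjR h
    have e1 : (insert j (insert i R)).erase i = insert j R := by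
      rw [Finset.insert_comm, Finset.erase_insert hi']
    have e2 : (insert j (insert i R)).erase j = insert i R := by
      rw [Finset.erase_insert hj']
    rw [e1, e2, mul_comm]
  rw [hL, hR, hD1, hD2, hXY]
  ring
/-- The key spectral estimate, by induction on the level. -/
private lemma down_bound : ∀ (k : ℕ) (f : Finset (Fin n) → ℝ),
    (∑ S ∈ Finset.powersetCard (k+1) (univ : Finset (Fin n)), f S = 0) →
    ∑ T ∈ Finset.powersetCard k (univ : Finset (Fin n)), (dOp f T) ^ 2
      ≤ (k : ℝ) * ((n : ℝ) - (k+1)) *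
          ∑ S ∈ Finset.powersetCard (k+1) (univ : Finset (Fin n)), f S ^ 2 := by
  intro k
  induction k with
  | zero =>
    intro f hf
    have h2 : dOp f (∅ : Finset (Fin n)) = 0 := by
      have h3 := sum_up (n := n) 0 (fun S _ => f S)
      rw [Finset.powersetCard_zero, Finset.sum_singleton] at h3
      have h4 : ∀ S ∈ Finset.powersetCard 1 (univ : Finset (Fin n)),
          ∑ _i ∈ S, f S = f S := by
        intro S hS
        rw [Finset.sum_const, mem_Pk.1 hS, one_smul]
      calc dOp f ∅ = ∑ S ∈ Finset.powersetCard 1 (univ : Finset (Fin n)), ∑ _i ∈ S, f S := h3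
        _ = ∑ S ∈ Finset.powersetCard 1 (univ : Finset (Fin n)), f S :=
            Finset.sum_congr rfl h4
        _ = 0 := hf
    rw [Finset.powersetCard_zero, Finset.sum_singleton, h2]
    simp
  | succ k ih =>
    intro f hf
    set g : Finset (Fin n) → ℝ := dOp f with hg
    by_cases hn2 : k + 2 ≤ n
    · have hgmean : ∑ T ∈ Finset.powersetCard (k+1) (univ : Finset (Fin n)), g T = 0 := by
        rw [hg, dOp_mean (k+1) f, hf, mul_zero]
      set q : ℝ := ∑ T ∈ Finset.powersetCard (k+1) (univ : Finset (Fin n)), (g T) ^ 2 with hqdef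
      have hq : q = ∑ S ∈ Finset.powersetCard (k+2) (univ : Finset (Fin n)),
          f S * ∑ i ∈ S, g (S.erase i) := by
        rw [adjoint (k+1) f g, hqdef]
        exact Finset.sum_congr rfl fun T _ => by rw [sq, hg]
      have CS : q ^ 2 ≤ (∑ S ∈ Finset.powersetCard (k+2) (univ : Finset (Fin n)), f S ^ 2)
          * ∑ S ∈ Finset.powersetCard (k+2) (univ : Finset (Fin n)),
              (∑ i ∈ S, g (S.erase i)) ^ 2 := by
        rw [hq]
        exact Finset.sum_mul_sq_le_sq_mul_sq _ _ _
      have hIH := ih g hgmean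
      have hB := uOp_norm k hn2 g
      have hsum : ∑ S ∈ Finset.powersetCard (k+2) (univ : Finset (Fin n)),
          (∑ i ∈ S, g (S.erase i)) ^ 2 ≤ ((k : ℝ)+1) * ((n : ℝ) - (k+2)) * q := by
        rw [hB]
        have hring : (k : ℝ) * ((n : ℝ) - (k+1)) * q + ((n : ℝ) - (2*k+2)) * q
            = ((k : ℝ)+1) * ((n : ℝ) - (k+2)) * q := by ring
        linarith [hIH]
      have hq0 : 0 ≤ q := Finset.sum_nonneg fun _ _ => sq_nonneg _
      have hf2 : 0 ≤ ∑ S ∈ Finset.powersetCard (k+2) (univ : Finset (Fin n)), f S ^ 2 :=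
        Finset.sum_nonneg fun _ _ => sq_nonneg _
      have hC : (0 : ℝ) ≤ ((k : ℝ)+1) * ((n : ℝ) - (k+2)) := by
        apply mul_nonneg (by positivity)
        have : ((k : ℝ) + 2) ≤ (n : ℝ) := by exact_mod_cast hn2
        linarith
      rcases eq_or_lt_of_le hq0 with h0 | hpos
      · calc ∑ T ∈ Finset.powersetCard (k+1) (univ : Finset (Fin n)), (dOp f T) ^ 2
            = q := rfl
          _ = 0 := h0.symm
          _ ≤ _ := by
            push_cast
            exact mul_nonneg (by push_cast at hC ⊢; linarith) hf2
      · have hfin : q ^ 2 ≤ (∑ S ∈ Finset.powersetCard (k+2) (univ : Finset (Fin n)), f S ^ 2)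
            * (((k : ℝ)+1) * ((n : ℝ) - (k+2)) * q) :=
          le_trans CS (mul_le_mul_of_nonneg_left hsum hf2)
        have : q ≤ ((k : ℝ)+1) * ((n : ℝ) - (k+2)) *
            ∑ S ∈ Finset.powersetCard (k+2) (univ : Finset (Fin n)), f S ^ 2 := by
          nlinarith [hfin, hpos]
        calc ∑ T ∈ Finset.powersetCard (k+1) (univ : Finset (Fin n)), (dOp f T) ^ 2 = q := rfl
          _ ≤ _ := by push_cast at this ⊢; linarith
    · have hempty : Finset.powersetCard (k+2) (univ : Finset (Fin n)) = ∅ := by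
        apply Finset.powersetCard_eq_empty.2
        rw [Finset.card_univ, Fintype.card_fin]
        omega
      have hf2 : ∑ S ∈ Finset.powersetCard (k+2) (univ : Finset (Fin n)), f S ^ 2 = 0 := by
        rw [hempty, Finset.sum_empty]
      have hL : ∑ T ∈ Finset.powersetCard (k+1) (univ : Finset (Fin n)), (dOp f T) ^ 2 = 0 := by
        apply Finset.sum_eq_zero
        intro T hT
        have h1 : T.card = k + 1 := mem_Pk.1 hT
        have h2 : T.card ≤ n := by
          have := Finset.card_le_univ T
          rwa [Fintype.card_fin] at this
        have h3 : T = univ := Finset.eq_univ_of_card T (by rw [Fintype.card_fin]; omega)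
        rw [dOp, h3, Finset.compl_univ, Finset.sum_empty]
        exact zero_pow two_ne_zero
      rw [hL, hf2, mul_zero]
/-- Local expansion: for `s := Tᶜ` and `a j := h (insert j T)`. -/
private lemma local_expand (s : Finset (Fin n)) (a : Fin n → ℝ) :
    ∑ j ∈ s, ∑ l ∈ s.erase j, (a j - a l) ^ 2
      = 2 * (s.card : ℝ) * (∑ j ∈ s, a j ^ 2) - 2 * (∑ j ∈ s, a j) ^ 2 := by
  have e1 : ∑ j ∈ s, ∑ l ∈ s.erase j, (a j - a l) ^ 2
      = ∑ j ∈ s, ∑ l ∈ s.erase j, (a j ^ 2 + a l ^ 2 - 2 * (a j * a l)) := by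
    refine Finset.sum_congr rfl fun j _ => Finset.sum_congr rfl fun l _ => by ring
  have e2 : ∑ j ∈ s, ∑ l ∈ s.erase j, a l ^ 2 = ∑ j ∈ s, ∑ l ∈ s.erase j, a j ^ 2 :=
    erase_swap s (fun j l => a l ^ 2)
  have e3 : ∀ j ∈ s, ∑ l ∈ s.erase j, a j ^ 2 = ((s.card : ℝ) - 1) * a j ^ 2 := by
    intro j hj
    rw [Finset.sum_const, Finset.card_erase_of_mem hj, nsmul_eq_mul]
    have : (1 : ℕ) ≤ s.card := Finset.card_pos.2 ⟨j, hj⟩ 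
    push_cast [this]
    ring
  have e4 : ∑ j ∈ s, ∑ l ∈ s.erase j, a j * a l = (∑ j ∈ s, a j) ^ 2 - ∑ j ∈ s, a j ^ 2 := by
    have := sq_sum_split s a
    linarith
  calc ∑ j ∈ s, ∑ l ∈ s.erase j, (a j - a l) ^ 2
      = (∑ j ∈ s, ∑ l ∈ s.erase j, a j ^ 2) + (∑ j ∈ s, ∑ l ∈ s.erase j, a l ^ 2)
        - 2 * ∑ j ∈ s, ∑ l ∈ s.erase j, a j * a l := by
        rw [e1]
        simp only [Finset.sum_add_distrib, Finset.sum_sub_distrib, Finset.mul_sum]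
    _ = 2 * ∑ j ∈ s, ((s.card : ℝ) - 1) * a j ^ 2
        - 2 * ((∑ j ∈ s, a j) ^ 2 - ∑ j ∈ s, a j ^ 2) := by
        rw [e2, e4, Finset.sum_congr rfl e3]
        ring
    _ = _ := by
        rw [Finset.mul_sum, Finset.mul_sum]
        rw [Finset.sum_congr rfl (fun j (_ : j ∈ s) =>
          (by ring : 2 * (((s.card : ℝ) - 1) * a j ^ 2)
            = 2 * (s.card : ℝ) * a j ^ 2 - 2 * a j ^ 2))]
        rw [Finset.sum_sub_distrib]
        rw [← Finset.mul_sum, ← Finset.mul_sum]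
        ring

/-- Core Dirichlet-form inequality at level `k+1`. -/
private lemma core_ineq (k : ℕ) (h : Finset (Fin n) → ℝ)
    (hmean : ∑ S ∈ Finset.powersetCard (k+1) (univ : Finset (Fin n)), h S = 0) :
    2 * (n : ℝ) * ∑ S ∈ Finset.powersetCard (k+1) (univ : Finset (Fin n)), h S ^ 2
      ≤ ∑ S ∈ Finset.powersetCard (k+1) (univ : Finset (Fin n)), ∑ j ∈ S, ∑ l ∈ Sᶜ,
          (h S - h (insert l (S.erase j))) ^ 2 := by
  -- rewrite the RHS via the substitution S = insert j T
  have step1 : ∑ S ∈ Finset.powersetCard (k+1) (univ : Finset (Fin n)), ∑ j ∈ S, ∑ l ∈ Sᶜ,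
        (h S - h (insert l (S.erase j))) ^ 2
      = ∑ T ∈ Finset.powersetCard k (univ : Finset (Fin n)), ∑ j ∈ Tᶜ, ∑ l ∈ Tᶜ.erase j,
          (h (insert j T) - h (insert l T)) ^ 2 := by
    rw [← sum_up k (fun S j => ∑ l ∈ Sᶜ, (h S - h (insert l (S.erase j))) ^ 2)]
    refine Finset.sum_congr rfl fun T _ => Finset.sum_congr rfl fun j hj => ?_
    have hjT : j ∉ T := Finset.mem_compl.1 hj
    rw [Finset.erase_insert hjT, Finset.compl_insert]
  rw [step1]
  -- expand each inner double sum
  have step2 : ∑ T ∈ Finset.powersetCard k (univ : Finset (Fin n)), ∑ j ∈ Tᶜ, ∑ l ∈ Tᶜ.erase j,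
        (h (insert j T) - h (insert l T)) ^ 2
      = ∑ T ∈ Finset.powersetCard k (univ : Finset (Fin n)),
          (2 * ((Tᶜ.card : ℝ)) * (∑ j ∈ Tᶜ, h (insert j T) ^ 2) - 2 * (dOp h T) ^ 2) :=
    Finset.sum_congr rfl fun T _ => local_expand Tᶜ (fun j => h (insert j T))
  rw [step2]
  -- compute the first part
  have hcard : ∀ T ∈ Finset.powersetCard k (univ : Finset (Fin n)), (Tᶜ.card : ℝ) = (n : ℝ) - k := by
    intro T hT
    rw [Finset.card_compl, mem_Pk.1 hT, Fintype.card_fin]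
    have hkn : k ≤ n := by
      have h1 := Finset.card_le_univ T
      rw [Fintype.card_fin] at h1
      have h2 := mem_Pk.1 hT
      omega
    rw [Nat.cast_sub hkn]
  have step3 : ∑ T ∈ Finset.powersetCard k (univ : Finset (Fin n)),
        (2 * ((Tᶜ.card : ℝ)) * (∑ j ∈ Tᶜ, h (insert j T) ^ 2) - 2 * (dOp h T) ^ 2)
      = 2 * ((n : ℝ) - k) *
          (∑ T ∈ Finset.powersetCard k (univ : Finset (Fin n)), ∑ j ∈ Tᶜ, h (insert j T) ^ 2)
        - 2 * ∑ T ∈ Finset.powersetCard k (univ : Finset (Fin n)), (dOp h T) ^ 2 := by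
    rw [Finset.sum_sub_distrib]
    congr 1
    · rw [Finset.sum_congr rfl (fun T hT => by rw [hcard T hT]), ← Finset.mul_sum]
    · rw [Finset.mul_sum]
  rw [step3]
  have step4 : ∑ T ∈ Finset.powersetCard k (univ : Finset (Fin n)), ∑ j ∈ Tᶜ, h (insert j T) ^ 2
      = ((k : ℝ) + 1) * ∑ S ∈ Finset.powersetCard (k+1) (univ : Finset (Fin n)), h S ^ 2 := by
    rw [sum_up k (fun S _ => h S ^ 2), Finset.mul_sum]
    refine Finset.sum_congr rfl fun S hS => ?_
    rw [Finset.sum_const, mem_Pk.1 hS, nsmul_eq_mul]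
    push_cast
    ring
  rw [step4]
  have hq := down_bound k h hmean
  have hs2 : (0:ℝ) ≤ ∑ S ∈ Finset.powersetCard (k+1) (univ : Finset (Fin n)), h S ^ 2 :=
    Finset.sum_nonneg fun _ _ => sq_nonneg _
  nlinarith [hq, hs2]
end Core

section Chain
variable {n c : ℕ}

def occ (z : ExclState n c) : Finset (Fin n) := univ.filter (fun i => z.1 i = true)

lemma mem_occ {z : ExclState n c} {i : Fin n} : i ∈ occ z ↔ z.1 i = true := by
  simp [occ]

lemma card_occ (z : ExclState n c) : (occ z).card = c := z.2

def ofSet (S : Finset (Fin n)) (hS : S.card = c) : ExclState n c :=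
  ⟨fun i => decide (i ∈ S), by
    have : (univ.filter (fun i => decide (i ∈ S) = true)) = S := by
      ext i; simp
    rw [this, hS]⟩

lemma occ_ofSet (S : Finset (Fin n)) (hS : S.card = c) : occ (ofSet S hS) = S := by
  ext i; simp [occ, ofSet]

lemma ofSet_occ (z : ExclState n c) : ofSet (occ z) (card_occ z) = z := by
  apply Subtype.ext
  funext i
  show decide (i ∈ occ z) = z.1 i
  by_cases hmem : i ∈ occ z
  · simp [hmem, mem_occ.1 hmem]
  · have hz : z.1 i = false := by
      cases h : z.1 i
      · rfl
      · exact absurd (mem_occ.2 h) hmem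
    simp [hmem, hz]

lemma occ_inj {z z' : ExclState n c} (h : occ z = occ z') : z = z' := by
  rw [← ofSet_occ z, ← ofSet_occ z']
  congr 1

lemma sum_occ (F : Finset (Fin n) → ℝ) :
    ∑ z : ExclState n c, F (occ z)
      = ∑ S ∈ Finset.powersetCard c (univ : Finset (Fin n)), F S := by
  refine Finset.sum_bij (fun z _ => occ z) ?_ ?_ ?_ ?_
  · intro z _
    rw [Finset.mem_powersetCard_univ]
    exact card_occ z
  · intro z _ z' _ h
    exact occ_inj h
  · intro S hS
    rw [Finset.mem_powersetCard_univ] at hS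
    exact ⟨ofSet S hS, Finset.mem_univ _, occ_ofSet S hS⟩
  · intro z _; rfl

lemma move_filter (z : ExclState n c) (j l : Fin n) (hj : z.1 j = true) (hl : z.1 l = false) :
    univ.filter (fun i => Function.update (Function.update z.1 j false) l true i = true)
      = insert l ((occ z).erase j) := by
  have hjl : j ≠ l := fun h => by rw [h, hl] at hj; exact Bool.noConfusion hj
  ext i
  simp only [Finset.mem_filter, Finset.mem_univ, true_and, Finset.mem_insert,
    Finset.mem_erase, mem_occ, Function.update_apply]
  by_cases hil : i = l
  · simp [hil]
  · by_cases hij : i = j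
    · simp [hil, hij, hjl, Ne.symm hjl]
    · simp [hil, hij]

noncomputable def move (z : ExclState n c) (j l : Fin n) : ExclState n c :=
  if h : z.1 j = true ∧ z.1 l = false then
    ⟨Function.update (Function.update z.1 j false) l true, by
      rw [move_filter z j l h.1 h.2]
      have hjmem : j ∈ occ z := mem_occ.2 h.1
      have hlnot : l ∉ (occ z).erase j := by
        intro hmem
        have := mem_occ.1 (Finset.mem_of_mem_erase hmem)
        rw [h.2] at this
        exact Bool.noConfusion this
      rw [Finset.card_insert_of_notMem hlnot, Finset.card_erase_of_mem hjmem, card_occ]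
      have : 0 < c := by
        have := card_occ z
        have h2 : (occ z).Nonempty := ⟨j, hjmem⟩
        have := Finset.card_pos.2 h2
        omega
      omega⟩
  else z

lemma move_val (z : ExclState n c) (j l : Fin n) (hj : z.1 j = true) (hl : z.1 l = false) :
    (move z j l).1 = Function.update (Function.update z.1 j false) l true := by
  rw [move]; exact congrArg Subtype.val (dif_pos (And.intro hj hl))

lemma occ_move (z : ExclState n c) (j l : Fin n) (hj : z.1 j = true) (hl : z.1 l = false) :
    occ (move z j l) = insert l ((occ z).erase j) := by
  have : occ (move z j l)
      = univ.filter (fun i => Function.update (Function.update z.1 j false) l true i = true) := by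
    rw [occ]
    congr 1
    funext i
    rw [move_val z j l hj hl]
  rw [this, move_filter z j l hj hl]


def Adj (z z' : ExclState n c) : Prop :=
  ∃ j ℓ : Fin n, z.1 j = true ∧ z.1 ℓ = false ∧
    z'.1 = Function.update (Function.update z.1 j false) ℓ true

lemma adj_symm {z z' : ExclState n c} (h : Adj z z') : Adj z' z := by
  obtain ⟨j, l, hj, hl, heq⟩ := h
  have hjl : j ≠ l := fun h => by rw [h, hl] at hj; exact Bool.noConfusion hj
  have hz'l : z'.1 l = true := by rw [heq]; simp [Function.update_apply]
  have hz'j : z'.1 j = false := by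
    rw [heq]
    simp [Function.update_apply, hjl]
  refine ⟨l, j, hz'l, hz'j, ?_⟩
  funext i
  rw [heq]
  simp only [Function.update_apply]
  by_cases hij : i = j
  · subst hij
    simp [hjl, hj]
  · by_cases hil : i = l
    · subst hil
      simp [Ne.symm hjl, hl]
    · simp [hij, hil]

lemma not_adj_self (z : ExclState n c) : ¬ Adj z z := by
  rintro ⟨j, l, hj, hl, heq⟩
  have : z.1 l = true := by rw [heq]; simp [Function.update_apply]
  rw [hl] at this
  exact Bool.noConfusion this

instance (z z' : ExclState n c) : Decidable (Adj z z') := by unfold Adj; infer_instance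

lemma kernel_symm (z z' : ExclState n c) : exclKernel n c z z' = exclKernel n c z' z := by
  by_cases h : z' = z
  · subst h; rfl
  · have h' : ¬ z = z' := fun hh => h hh.symm
    simp only [exclKernel]
    rw [if_neg h, if_neg h']
    by_cases ha : Adj z z'
    · have ha1 : ∃ j ℓ : Fin n, z.1 j = true ∧ z.1 ℓ = false ∧
          z'.1 = Function.update (Function.update z.1 j false) ℓ true := ha
      have ha2 : ∃ j ℓ : Fin n, z'.1 j = true ∧ z'.1 ℓ = false ∧
          z.1 = Function.update (Function.update z'.1 j false) ℓ true := adj_symm ha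
      rw [if_pos ha1, if_pos ha2]
    · have hb1 : ¬ ∃ j ℓ : Fin n, z.1 j = true ∧ z.1 ℓ = false ∧
          z'.1 = Function.update (Function.update z.1 j false) ℓ true := ha
      have hb2 : ¬ ∃ j ℓ : Fin n, z'.1 j = true ∧ z'.1 ℓ = false ∧
          z.1 = Function.update (Function.update z'.1 j false) ℓ true :=
        fun hh => ha (adj_symm hh)
      rw [if_neg hb1, if_neg hb2]

lemma kernel_sum (f : ExclState n c → ℝ) (z : ExclState n c) :
    ∑ z' : ExclState n c, exclKernel n c z z' * (f z - f z') ^ 2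
      = (1 / ((c : ℝ) * n)) * ∑ j ∈ occ z, ∑ l ∈ (occ z)ᶜ, (f z - f (move z j l)) ^ 2 := by
  have hpt : ∀ z' : ExclState n c, exclKernel n c z z' * (f z - f z') ^ 2
      = if Adj z z' then (1 / ((c : ℝ) * n)) * (f z - f z') ^ 2 else 0 := by
    intro z'
    by_cases h : z' = z
    · have hno : ¬ Adj z z' := by rw [h]; exact not_adj_self z
      rw [if_neg hno, h]
      simp [exclKernel]
    · rw [exclKernel, if_neg h]
      by_cases ha : Adj z z'
      · have ha1 : ∃ j ℓ : Fin n, z.1 j = true ∧ z.1 ℓ = false ∧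
            z'.1 = Function.update (Function.update z.1 j false) ℓ true := ha
        rw [if_pos ha1, if_pos ha]
      · have hb1 : ¬ ∃ j ℓ : Fin n, z.1 j = true ∧ z.1 ℓ = false ∧
            z'.1 = Function.update (Function.update z.1 j false) ℓ true := ha
        rw [if_neg hb1, if_neg ha, zero_mul]
  classical
  rw [Finset.sum_congr rfl (fun z' _ => hpt z'), Finset.sum_ite, Finset.sum_const_zero,
    add_zero]
  have hprod : ∑ j ∈ occ z, ∑ l ∈ (occ z)ᶜ, (f z - f (move z j l)) ^ 2
      = ∑ p ∈ (occ z) ×ˢ (occ z)ᶜ, (f z - f (move z p.1 p.2)) ^ 2 :=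
    (Finset.sum_product' _ _ _).symm
  rw [hprod, Finset.mul_sum]
  symm
  refine Finset.sum_bij (fun p _ => move z p.1 p.2) ?_ ?_ ?_ ?_
  · rintro ⟨j, l⟩ hp
    rw [Finset.mem_product] at hp
    have hj : z.1 j = true := mem_occ.1 hp.1
    have hl : z.1 l = false := by
      have hno := Finset.mem_compl.1 hp.2
      cases h : z.1 l
      · rfl
      · exact absurd (mem_occ.2 h) hno
    rw [Finset.mem_filter]
    exact ⟨Finset.mem_univ _, j, l, hj, hl, move_val z j l hj hl⟩
  · rintro ⟨j, l⟩ hp ⟨j', l'⟩ hp' heq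
    rw [Finset.mem_product] at hp hp'
    have hj : z.1 j = true := mem_occ.1 hp.1
    have hl : z.1 l = false := by
      have hno := Finset.mem_compl.1 hp.2
      cases h : z.1 l
      · rfl
      · exact absurd (mem_occ.2 h) hno
    have hj' : z.1 j' = true := mem_occ.1 hp'.1
    have hl' : z.1 l' = false := by
      have hno := Finset.mem_compl.1 hp'.2
      cases h : z.1 l'
      · rfl
      · exact absurd (mem_occ.2 h) hno
    have hv : Function.update (Function.update z.1 j false) l true
        = Function.update (Function.update z.1 j' false) l' true := by
      have h3 : move z j l = move z j' l' := heq
      have h2 : (move z j l).1 = (move z j' l').1 := by rw [h3]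
      rwa [move_val z j l hj hl, move_val z j' l' hj' hl'] at h2
    have hjl : j ≠ l := fun h => by rw [h, hl] at hj; exact Bool.noConfusion hj
    have hll : l = l' := by
      by_contra hne
      have hcl := congrFun hv l
      simp [Function.update_apply, hne, hl] at hcl
    subst hll
    have hjj : j = j' := by
      by_contra hne
      have hcj := congrFun hv j
      simp [Function.update_apply, hjl, hne, hj] at hcj
    subst hjj
    rfl
  · intro z' hz'
    rw [Finset.mem_filter] at hz'
    obtain ⟨-, j, l, hj, hl, heq⟩ := hz'
    refine ⟨⟨j, l⟩, ?_, ?_⟩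
    · rw [Finset.mem_product]
      constructor
      · exact mem_occ.2 hj
      · rw [Finset.mem_compl, mem_occ, hl]
        simp
    · apply Subtype.ext
      rw [move_val z j l hj hl, heq]
  · rintro ⟨j, l⟩ hp; rfl

end Chain

section Main
variable {n c : ℕ}

lemma excl_nonempty (hcn : c ≤ n) : Nonempty (ExclState n c) := by
  obtain ⟨S, -, hS⟩ := Finset.exists_subset_card_eq
    (show c ≤ (univ : Finset (Fin n)).card by simpa using hcn)
  exact ⟨ofSet S hS⟩

lemma main_bound (hc : 1 ≤ c) (hcn : c < n) (f : ExclState n c → ℝ) :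
    distVar (fun _ : ExclState n c => 1 / (Fintype.card (ExclState n c) : ℝ)) f
      ≤ (c : ℝ) * dirichletForm (fun _ : ExclState n c => 1 / (Fintype.card (ExclState n c) : ℝ))
          (exclKernel n c) f := by
  obtain ⟨k, rfl⟩ : ∃ k, c = k + 1 := ⟨c - 1, by omega⟩
  have := excl_nonempty (n := n) (c := k+1) hcn.le
  set N : ℝ := (Fintype.card (ExclState n (k+1)) : ℝ) with hNdef
  have hN : 0 < N := by
    rw [hNdef]
    exact_mod_cast Fintype.card_pos (α := ExclState n (k+1))
  have hn0 : (0:ℝ) < n := by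
    have : 0 < n := by omega
    exact_mod_cast this
  have hc0 : (0:ℝ) < (k+1 : ℕ) := by exact_mod_cast Nat.succ_pos k
  set π : ExclState n (k+1) → ℝ := fun _ => 1 / N with hπ
  set m : ℝ := distMean π f with hm
  set h' : ExclState n (k+1) → ℝ := fun z => f z - m with hh'
  set H : Finset (Fin n) → ℝ :=
    fun S => if hS : S.card = k+1 then h' (ofSet S hS) else 0 with hH
  have hHocc : ∀ z : ExclState n (k+1), H (occ z) = h' z := by
    intro z
    rw [hH]
    simp only
    rw [dif_pos (card_occ z)]
    congr 1
    exact ofSet_occ z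
  have hsum_h : ∑ z : ExclState n (k+1), h' z = 0 := by
    have hm2 : m = (1 / N) * ∑ z : ExclState n (k+1), f z := by
      rw [hm, distMean, ← Finset.mul_sum]
    have : ∑ z : ExclState n (k+1), h' z
        = (∑ z : ExclState n (k+1), f z) - (Fintype.card (ExclState n (k+1))) * m := by
      rw [hh']
      simp only
      rw [Finset.sum_sub_distrib, Finset.sum_const, Finset.card_univ, nsmul_eq_mul]
    rw [this, hm2, ← hNdef]
    field_simp
    ring
  have hHmean : ∑ S ∈ Finset.powersetCard (k+1) (univ : Finset (Fin n)), H S = 0 := by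
    rw [← sum_occ H, Finset.sum_congr rfl (fun z _ => hHocc z)]
    exact hsum_h
  have hHsq : ∑ S ∈ Finset.powersetCard (k+1) (univ : Finset (Fin n)), H S ^ 2
      = ∑ z : ExclState n (k+1), h' z ^ 2 := by
    rw [← sum_occ (fun S => H S ^ 2)]
    exact Finset.sum_congr rfl (fun z _ => by rw [hHocc z])
  set X : ℝ := ∑ S ∈ Finset.powersetCard (k+1) (univ : Finset (Fin n)), H S ^ 2 with hX
  set T : ℝ := ∑ S ∈ Finset.powersetCard (k+1) (univ : Finset (Fin n)), ∑ j ∈ S, ∑ l ∈ Sᶜ,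
      (H S - H (insert l (S.erase j))) ^ 2 with hT
  have hcore : 2 * (n : ℝ) * X ≤ T := core_ineq k H hHmean
  -- variance
  have hvar : distVar π f = (1 / N) * X := by
    have h1 : distVar π f = ∑ z : ExclState n (k+1), (1 / N) * (h' z) ^ 2 := rfl
    rw [h1, ← Finset.mul_sum, ← hHsq]
  -- Dirichlet form
  have hG : ∀ z : ExclState n (k+1),
      ∑ j ∈ occ z, ∑ l ∈ (occ z)ᶜ, (h' z - h' (move z j l)) ^ 2
        = ∑ j ∈ occ z, ∑ l ∈ (occ z)ᶜ, (H (occ z) - H (insert l ((occ z).erase j))) ^ 2 := by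
    intro z
    refine Finset.sum_congr rfl fun j hj => Finset.sum_congr rfl fun l hl => ?_
    have hjz : z.1 j = true := mem_occ.1 hj
    have hlz : z.1 l = false := by
      have hno := Finset.mem_compl.1 hl
      cases hb : z.1 l
      · rfl
      · exact absurd (mem_occ.2 hb) hno
    rw [hHocc z, ← occ_move z j l hjz hlz, hHocc (move z j l)]
  have hdir : dirichletForm π (exclKernel n (k+1)) f
      = (1/2) * ((1 / N) * ((1 / (((k+1 : ℕ) : ℝ) * n)) * T)) := by
    rw [dirichletForm]
    congr 1
    have hrow : ∀ z : ExclState n (k+1),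
        ∑ z' : ExclState n (k+1), π z * exclKernel n (k+1) z z' * (f z - f z') ^ 2
          = (1 / N) * ((1 / (((k+1 : ℕ) : ℝ) * n)) *
              ∑ j ∈ occ z, ∑ l ∈ (occ z)ᶜ, (H (occ z) - H (insert l ((occ z).erase j))) ^ 2) := by
      intro z
      have : ∀ z' : ExclState n (k+1), π z * exclKernel n (k+1) z z' * (f z - f z') ^ 2
          = (1 / N) * (exclKernel n (k+1) z z' * (h' z - h' z') ^ 2) := by
        intro z'
        rw [hπ, hh']
        ring_nf
      rw [Finset.sum_congr rfl (fun z' _ => this z'), ← Finset.mul_sum,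
        kernel_sum h' z, hG z]
    rw [Finset.sum_congr rfl (fun z _ => hrow z), ← Finset.mul_sum, ← Finset.mul_sum,
      sum_occ (fun S => ∑ j ∈ S, ∑ l ∈ Sᶜ, (H S - H (insert l (S.erase j))) ^ 2), ← hT]
  rw [hvar, hdir]
  have hX0 : 0 ≤ X := by
    rw [hX]; exact Finset.sum_nonneg fun _ _ => sq_nonneg _
  have heq : ((k+1 : ℕ) : ℝ) * ((1/2) * ((1 / N) * ((1 / (((k+1 : ℕ) : ℝ) * n)) * T)))
      = T / (2 * N * n) := by
    field_simp
  rw [heq, show (1 / N) * X = X / N by ring, div_le_div_iff₀ hN (by positivity)]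
  nlinarith [mul_le_mul_of_nonneg_right hcore hN.le]

lemma var_pos_aux (π : ExclState n c → ℝ) (hπ : ∀ x, 0 < π x) (f : ExclState n c → ℝ)
    (h0 : distVar π f = 0) (x : ExclState n c) : f x = distMean π f := by
  have hnn : ∀ x ∈ (univ : Finset (ExclState n c)), 0 ≤ π x * (f x - distMean π f) ^ 2 :=
    fun x _ => mul_nonneg (hπ x).le (sq_nonneg _)
  have := (Finset.sum_eq_zero_iff_of_nonneg hnn).1 h0 x (Finset.mem_univ x)
  have h2 : (f x - distMean π f) ^ 2 = 0 := by
    rcases mul_eq_zero.1 this with h | h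
    · exact absurd h (ne_of_gt (hπ x))
    · exact h
  have := pow_eq_zero_iff (n := 2) (by norm_num) |>.1 h2
  linarith [this]

end Main

/-- The exclusion process with `c` particles on the complete
graph on `n` vertices is reversible with respect to the uniform distribution
and has spectral gap at least `1/c`. -/
theorem exclusion_gap_ge (n c : ℕ) (hn : 2 ≤ n) (hc : 1 ≤ c) (hcn : c < n) :
    IsReversible (fun _ : ExclState n c => 1 / (Fintype.card (ExclState n c) : ℝ))
        (exclKernel n c) ∧
      1 / (c : ℝ) ≤
        spectralGap (fun _ : ExclState n c => 1 / (Fintype.card (ExclState n c) : ℝ))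
          (exclKernel n c) := by

  have hne := excl_nonempty (n := n) (c := c) hcn.le
  set π : ExclState n c → ℝ := fun _ => 1 / (Fintype.card (ExclState n c) : ℝ) with hπdef
  have hN : (0:ℝ) < (Fintype.card (ExclState n c) : ℝ) := by
    exact_mod_cast Fintype.card_pos (α := ExclState n c)
  have hπpos : ∀ x, 0 < π x := fun x => by rw [hπdef]; positivity
  constructor
  · intro x y
    show π x * exclKernel n c x y = π y * exclKernel n c y x
    rw [hπdef, kernel_symm]
  · apply le_csInf
    · -- nonempty: build a nonconstant function
      obtain ⟨S, -, hS⟩ := Finset.exists_subset_card_eq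
        (show c ≤ (univ : Finset (Fin n)).card by simpa using hcn.le)
      set z₀ : ExclState n c := ofSet S hS with hz₀
      have hSne : S.Nonempty := Finset.card_pos.1 (by omega)
      obtain ⟨j, hj⟩ := hSne
      have hScne : Sᶜ.Nonempty := by
        rw [← Finset.card_pos, Finset.card_compl, hS, Fintype.card_fin]
        omega
      obtain ⟨l, hl⟩ := hScne
      have hjz : z₀.1 j = true := mem_occ.1 (by rw [hz₀, occ_ofSet]; exact hj)
      have hlz : z₀.1 l = false := by
        have hno : l ∉ occ z₀ := by rw [hz₀, occ_ofSet]; exact Finset.mem_compl.1 hl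
        cases hb : z₀.1 l
        · rfl
        · exact absurd (mem_occ.2 hb) hno
      set z₁ : ExclState n c := move z₀ j l with hz₁
      have hdiff : z₁ ≠ z₀ := by
        intro hcontra
        have h1 : occ z₁ = occ z₀ := by rw [hcontra]
        rw [hz₁, occ_move z₀ j l hjz hlz] at h1
        have hlm : l ∈ occ z₀ := by
          rw [← h1]; exact Finset.mem_insert_self _ _
        rw [hz₀, occ_ofSet] at hlm
        exact (Finset.mem_compl.1 hl) hlm
      set f : ExclState n c → ℝ := fun z => if z = z₀ then 1 else 0 with hf
      have hvar : distVar π f ≠ 0 := by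
        intro h0
        have h1 := var_pos_aux π hπpos f h0 z₀
        have h2 := var_pos_aux π hπpos f h0 z₁
        have h1' : (1:ℝ) = distMean π f := by simpa [hf] using h1
        have h2' : (0:ℝ) = distMean π f := by simpa [hf, hdiff] using h2
        rw [← h1'] at h2'
        exact one_ne_zero h2'.symm
      exact ⟨_, f, hvar, rfl⟩
    · rintro r ⟨f, hvar, rfl⟩
      have hkey := main_bound hc hcn f
      have hvnn : 0 ≤ distVar π f :=
        Finset.sum_nonneg fun x _ => mul_nonneg (hπpos x).le (sq_nonneg _)
      have hvpos : 0 < distVar π f := lt_of_le_of_ne hvnn (Ne.symm hvar)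
      have hc0 : (0:ℝ) < c := by exact_mod_cast hc
      rw [div_le_div_iff₀ hc0 hvpos]
      calc 1 * distVar π f = distVar π f := one_mul _
        _ ≤ (c:ℝ) * dirichletForm π (exclKernel n c) f := hkey
        _ = dirichletForm π (exclKernel n c) f * (c:ℝ) := mul_comm _ _
end

section
/- Let η be a continuous real-valued function on a compact metric space Θ that is multimodal, witnessed by points θ⁽¹⁾, θ⁽²⁾ and disjoint bounded sets F₁, F₂ with sup_{∂F_j} η < η(θ⁽ʲ⁾). Then for any ξ with min_j sup_{∂F_j} η < ξ < min_j η(θ⁽ʲ⁾) and with ξ > sup_{∂F₁} η, the sets B̃₁ = F₁ ∩ {η ≥ ξ} and B̃₂ = {η ≥ ξ} \ F₁ are nonempty and separated by a positive Euclidean distance ε > 0. -/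
open Bornology

/-- Let `η` be continuous on a compact `Θ ⊆ ℝ^d` and
multimodal, witnessed by `θ⁽¹⁾ ∈ F₁`, `θ⁽²⁾ ∈ F₂` with `F₁ ∩ F₂ = ∅` and
`sup_{∂F_j} η < η(θ⁽ʲ⁾)`. Then for any `ξ` with
`sup_{∂F₁} η < ξ < min_j η(θ⁽ʲ⁾)`, the sets `B̃₁ = F₁ ∩ {η ≥ ξ}` and
`B̃₂ = {η ≥ ξ} \ F₁` (within `Θ`) are nonempty and separated by some
Euclidean distance `ε > 0`. -/
theorem multimodal_separated_sets {d : ℕ}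
    (Θ : Set (EuclideanSpace ℝ (Fin d))) (hΘ : IsCompact Θ)
    (η : EuclideanSpace ℝ (Fin d) → ℝ) (hη : ContinuousOn η Θ)
    (θ1 θ2 : EuclideanSpace ℝ (Fin d)) (F1 F2 : Set (EuclideanSpace ℝ (Fin d)))
    (hF1 : F1 ⊆ Θ) (hF2 : F2 ⊆ Θ)
    (hb1 : IsBounded F1) (hb2 : IsBounded F2)
    (hθ1 : θ1 ∈ F1) (hθ2 : θ2 ∈ F2) (hdisj : F1 ∩ F2 = ∅)
    (m1 m2 : ℝ)
    (hm1 : ∀ x ∈ frontier F1, η x ≤ m1) (hm1' : m1 < η θ1)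
    (hm2 : ∀ x ∈ frontier F2, η x ≤ m2) (hm2' : m2 < η θ2)
    (ξ : ℝ) (hξ1 : m1 < ξ) (hξ2 : ξ < η θ1) (hξ3 : ξ < η θ2) :
    (F1 ∩ {θ ∈ Θ | ξ ≤ η θ}).Nonempty ∧
      ({θ ∈ Θ | ξ ≤ η θ} \ F1).Nonempty ∧
      ∃ ε > 0, ∀ x ∈ F1 ∩ {θ ∈ Θ | ξ ≤ η θ},
        ∀ y ∈ {θ ∈ Θ | ξ ≤ η θ} \ F1, ε ≤ dist x y := by
  have hθ2F1 : θ2 ∉ F1 := by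
    intro h
    have : θ2 ∈ F1 ∩ F2 := ⟨h, hθ2⟩
    rw [hdisj] at this
    exact this
  refine ⟨⟨θ1, hθ1, hF1 hθ1, le_of_lt hξ2⟩,
    ⟨θ2, ⟨hF2 hθ2, le_of_lt hξ3⟩, hθ2F1⟩, ?_⟩
  -- S is compact
  have hScl : IsClosed {θ ∈ Θ | ξ ≤ η θ} := by
    have : {θ ∈ Θ | ξ ≤ η θ} = Θ ∩ η ⁻¹' (Set.Ici ξ) := rfl
    rw [this]
    exact ContinuousOn.preimage_isClosed_of_isClosed hη hΘ.isClosed isClosed_Ici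
  have hScomp : IsCompact {θ ∈ Θ | ξ ≤ η θ} :=
    hΘ.of_isClosed_subset hScl (fun x hx => hx.1)
  set S := {θ ∈ Θ | ξ ≤ η θ}
  set K1 := closure F1 ∩ S
  set K2 := closure F1ᶜ ∩ S
  have hK1 : IsCompact K1 :=
    hScomp.of_isClosed_subset (isClosed_closure.inter hScl) Set.inter_subset_right
  have hK2closed : IsClosed K2 := isClosed_closure.inter hScl
  have hdisjK : Disjoint K1 K2 := by
    rw [Set.disjoint_left]
    rintro x ⟨hx1, hxS⟩ ⟨hx2, -⟩
    have hfr : x ∈ frontier F1 := by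
      rw [frontier_eq_closure_inter_closure]; exact ⟨hx1, hx2⟩
    exact absurd hxS.2 (not_le.mpr (lt_of_le_of_lt (hm1 x hfr) hξ1))
  obtain ⟨δ, hδ, hthick⟩ := hdisjK.exists_thickenings hK1 hK2closed
  refine ⟨δ, hδ, ?_⟩
  rintro x ⟨hxF1, hxS⟩ y ⟨hyS, hyF1⟩
  by_contra h
  push_neg at h
  have hx : x ∈ Metric.thickening δ K1 :=
    Metric.self_subset_thickening hδ K1 ⟨subset_closure hxF1, hxS⟩
  have hy : x ∈ Metric.thickening δ K2 := by
    apply Metric.mem_thickening_iff.mpr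
    exact ⟨y, show y ∈ K2 from ⟨subset_closure hyF1, hyS⟩, h⟩
  exact Set.disjoint_left.mp hthick hx hy
end
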